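/- arXiv:1009.5999 — 8 statements merged into one kernel-verified Lean document; each statement's English description precedes it below -/
import Mathlib

section
/- Let V be a finite-dimensional real vector space with a nondegenerate symmetric bilinear form G, W ⊆ V a subspace, and F an alternating bilinear form on W. Call (u,v) with u ∈ W, v ∈ V an 'allowed pair' if G(v,w) = F(u,w) for all w ∈ W. If G(u,u) = -G(v,v) holds for all allowed pairs (u,v), then W⊥ ⊆ W, i.e. W is coisotropic with respect to G. -/
open Module

/-- If `G(u,u) = -G(v,v)` for all allowed pairs `(u,v)`
(i.e. `u ∈ W`, `v ∈ V` with `G(v,·)|_W = F(u,·)|_W`), then `W` is coisotropic: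
`W⊥ ⊆ W`. -/
theorem stmt1 {V : Type*} [AddCommGroup V] [Module ℝ V] [FiniteDimensional ℝ V]
    (G : LinearMap.BilinForm ℝ V) (hGnd : G.Nondegenerate) (hGsymm : G.IsSymm)
    (W : Submodule ℝ V) (F : LinearMap.BilinForm ℝ W) (hFalt : F.IsAlt)
    (hconf : ∀ (u : W) (v : V), (∀ w : W, G v w = F u w) →
      G (u : V) (u : V) = -G v v) :
    ∀ v : V, (∀ w ∈ W, G v w = 0) → v ∈ W := by
  intro v hv
  have hrefl : G.IsRefl := hGsymm.isRefl
  have key : ∀ x : V, (∀ w ∈ W, G x w = 0) → G x x = 0 := by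
    intro x hx
    have h := hconf 0 x (fun w => by simp [hx w w.2])
    simpa using h.symm
  have hmem : v ∈ G.orthogonal (G.orthogonal W) := by
    rw [LinearMap.BilinForm.mem_orthogonal_iff]
    intro n hn
    have hn' : ∀ w ∈ W, G n w = 0 := by
      intro w hw
      exact hrefl _ _ ((LinearMap.BilinForm.mem_orthogonal_iff.mp hn) w hw)
    have hsum : ∀ w ∈ W, G (n + v) w = 0 := by
      intro w hw
      simp [hn' w hw, hv w hw]
    have h1 := key n hn'
    have h2 := key v hv
    have h3 := key (n + v) hsum
    have hsym : G n v = G v n := by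
      have := hGsymm.eq n v
      simpa using this
    simp only [map_add, LinearMap.add_apply] at h3
    show G n v = 0
    nlinarith [h1, h2, h3, hsym]
  have := LinearMap.BilinForm.orthogonal_orthogonal hGnd hrefl W
  rw [this] at hmem
  exact hmem
end

section
/- Let V be a finite-dimensional real vector space with a nondegenerate symmetric bilinear form G, W ⊆ V a subspace, F an alternating bilinear form on W, and call (u,v) an allowed pair if u ∈ W, v ∈ V, and G(v,w) = F(u,w) for all w ∈ W. If G(u,u) = -G(v,v) for every allowed pair (u,v), then for every allowed pair (u,v) one has v ∈ W. -/
open Module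

/-- If `G(u,u) = -G(v,v)` for every allowed pair `(u,v)`, then for
every allowed pair `(u,v)` one has `v ∈ W`. -/
theorem stmt2 {V : Type*} [AddCommGroup V] [Module ℝ V] [FiniteDimensional ℝ V]
    (G : LinearMap.BilinForm ℝ V) (hGnd : G.Nondegenerate) (hGsymm : G.IsSymm)
    (W : Submodule ℝ V) (F : LinearMap.BilinForm ℝ W) (hFalt : F.IsAlt)
    (hconf : ∀ (u : W) (v : V), (∀ w : W, G v w = F u w) →
      G (u : V) (u : V) = -G v v) :
    ∀ (u : W) (v : V), (∀ w : W, G v w = F u w) → v ∈ W := by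
  intro u v hv
  have hrefl : G.IsRefl := hGsymm.isRefl
  rw [← LinearMap.BilinForm.orthogonal_orthogonal hGnd hrefl W]
  rw [LinearMap.BilinForm.mem_orthogonal_iff]
  intro v₀ hv₀
  -- v₀ is orthogonal to every element of W
  have hv₀' : ∀ w : W, G v₀ w = 0 := fun w => by
    exact hrefl _ _ (hv₀ (w : V) w.2)
  -- (u, v + t v₀) is allowed for all t
  have hall : ∀ t : ℝ, ∀ w : W, G (v + t • v₀) w = F u w := by
    intro t w
    simp [map_add, map_smul, hv₀' w, hv w]
  have key : ∀ t : ℝ, G (v + t • v₀) (v + t • v₀) = G v v := by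
    intro t
    have h1 := hconf u (v + t • v₀) (hall t)
    have h2 := hconf u v hv
    have := h1.symm.trans h2
    linarith
  have e1 := key 1
  have e2 := key (-1)
  have hs : G v₀ v = G v v₀ := (hGsymm.eq v₀ v)
  simp only [one_smul, neg_one_smul, map_add, map_neg, LinearMap.add_apply,
    LinearMap.neg_apply, map_sub] at e1 e2
  have : G v₀ v = 0 := by linarith
  exact this
end

section
/- Let V be a finite-dimensional real vector space with a nondegenerate symmetric bilinear form G of signature (n,n), let W ⊆ V be a subspace, and F an alternating bilinear form on W. Define allowed pairs (u,v) by u ∈ W, v ∈ V, G(v,w) = F(u,w) for all w ∈ W. Suppose G(u,u) = -G(v,v) for all allowed pairs. Then for every allowed pair (u,v), v ∈ W and (v,u) is also an allowed pair, i.e. G(u,w) = F(v,w) for all w ∈ W. -/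
open Module

/-- Proposition 1: For `G` of signature `(n,n)`, if
`G(u,u) = -G(v,v)` for all allowed pairs `(u,v)`, then for every allowed pair
`(u,v)` one has `v ∈ W` and `(v,u)` is also an allowed pair:
`G(u,w) = F(v,w)` for all `w ∈ W`. -/
theorem stmt4 {V : Type*} [AddCommGroup V] [Module ℝ V] [FiniteDimensional ℝ V]
    (n : ℕ) (hdim : finrank ℝ V = 2 * n)
    (G : LinearMap.BilinForm ℝ V) (hGnd : G.Nondegenerate) (hGsymm : G.IsSymm)
    (hsig : ∃ P N : Submodule ℝ V, IsCompl P N ∧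
      finrank ℝ P = n ∧ finrank ℝ N = n ∧
      (∀ x ∈ P, x ≠ 0 → 0 < G x x) ∧ (∀ x ∈ N, x ≠ 0 → G x x < 0))
    (W : Submodule ℝ V) (F : LinearMap.BilinForm ℝ W) (hFalt : F.IsAlt)
    (hconf : ∀ (x : W) (y : V), (∀ w : W, G y w = F x w) →
      G (x : V) (x : V) = -G y y) :
    ∀ (u : W) (v : V), (∀ w : W, G v w = F u w) →
      ∃ hv : v ∈ W, ∀ w : W, G (u : V) (w : V) = F ⟨v, hv⟩ w := by
  have sG : ∀ a b : V, G a b = G b a := fun a b => hGsymm.eq a b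
  -- polarization: for two allowed pairs, G x x' = -G y y'
  have pol : ∀ (x x' : W) (y y' : V), (∀ w : W, G y w = F x w) →
      (∀ w : W, G y' w = F x' w) → G (x : V) (x' : V) = -G y y' := by
    intro x x' y y' h h'
    have hsum : ∀ w : W, G (y + y') w = F (x + x') w := by
      intro w; simp [h w, h' w]
    have e1 := hconf _ _ hsum
    have e2 := hconf _ _ h
    have e3 := hconf _ _ h'
    simp only [Submodule.coe_add, map_add, LinearMap.add_apply] at e1
    have s1 := sG (x' : V) (x : V)
    have s2 := sG y' y
    linarith
  -- surjectivity: every x : W admits a partner y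
  have hsurj : ∀ x : W, ∃ y : V, ∀ w : W, G y w = F x w := by
    intro x
    obtain ⟨ψ, hψ⟩ := Subspace.dualRestrict_surjective (W := W) (F x)
    refine ⟨(G.toDual hGnd).symm ψ, fun w => ?_⟩
    rw [LinearMap.BilinForm.apply_toDual_symm_apply]
    have : W.dualRestrict ψ w = F x w := by rw [hψ]
    simpa [Submodule.dualRestrict_apply] using this
  intro u v huv
  have hGrefl : G.IsRefl := hGsymm.isRefl
  have hvW : v ∈ W := by
    rw [← G.orthogonal_orthogonal hGnd hGrefl W]
    intro z hz
    have hz0 : ∀ w : W, G z w = F (0 : W) w := by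
      intro w
      have := hz w w.2
      change G (w : V) z = 0 at this
      simp [sG z w, this]
    have hp := pol u 0 v z huv hz0
    have : G v z = 0 := by simpa using hp.symm
    show G z v = 0
    rw [sG z v]; exact this
  refine ⟨hvW, fun w => ?_⟩
  obtain ⟨y, hy⟩ := hsurj w
  have hp := pol u w v y huv hy
  have h1 : G y v = F w ⟨v, hvW⟩ := hy ⟨v, hvW⟩
  have h2 : -F (⟨v, hvW⟩ : W) w = F w ⟨v, hvW⟩ := LinearMap.IsAlt.neg hFalt _ _
  rw [hp, sG v y, h1, ← h2, neg_neg]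
end

section
/- Let V be a finite-dimensional real vector space with a nondegenerate symmetric bilinear form G, let W be a coisotropic subspace (W⊥ ⊆ W), and let F be an alternating bilinear form on W with ker F = W⊥ (i.e., F(u,w) = 0 for all w ∈ W iff u ∈ W⊥). Let S be a complement of W⊥ in W, so that G and F restrict to nondegenerate forms G̃, F̃ on S, and suppose (G̃⁻¹F̃)² = id on S. Then for every pair (u,v) with u ∈ W, v ∈ V and G(v,·)|_W = F(u,·)|_W, one has v ∈ W and G(u,·)|_W = F(v,·)|_W. -/
open Module

/-- The `G`-orthogonal of a subspace `W`. -/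
def orthSub {V : Type*} [AddCommGroup V] [Module ℝ V]
    (G : LinearMap.BilinForm ℝ V) (W : Submodule ℝ V) : Submodule ℝ V where
  carrier := {v | ∀ w ∈ W, G v w = 0}
  zero_mem' := by intro w hw; simp
  add_mem' := by intro a b ha hb w hw; simp [ha w hw, hb w hw]
  smul_mem' := by intro c a ha w hw; simp [ha w hw]

/-- "if" direction of Proposition 3: if `W` is coisotropic, the
radical of `F` equals `W⊥`, and on a screen complement `S` of `W⊥` in `W` the
endomorphism `R = G̃⁻¹F̃` squares to the identity, then `(W,F)` satisfies the
topological bibrane condition. -/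
theorem stmt5 {V : Type*} [AddCommGroup V] [Module ℝ V] [FiniteDimensional ℝ V]
    (G : LinearMap.BilinForm ℝ V) (hGnd : G.Nondegenerate) (hGsymm : G.IsSymm)
    (W : Submodule ℝ V) (hco : orthSub G W ≤ W)
    (F : LinearMap.BilinForm ℝ W) (hFalt : F.IsAlt)
    (hker : ∀ u : W, (∀ w : W, F u w = 0) ↔ (u : V) ∈ orthSub G W)
    (S : Submodule ℝ V) (hSle : S ≤ W)
    (hdisj : S ⊓ orthSub G W = ⊥) (hsup : S ⊔ orthSub G W = W)
    (hGS : ∀ x : S, (∀ y : S, G (x : V) (y : V) = 0) → x = 0)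
    (hFS : ∀ x : S, (∀ y : S, F ⟨(x : V), hSle x.2⟩ ⟨(y : V), hSle y.2⟩ = 0) → x = 0)
    (R : S →ₗ[ℝ] S)
    (hR : ∀ x y : S, F ⟨(x : V), hSle x.2⟩ ⟨(y : V), hSle y.2⟩ = G ((R x : S) : V) (y : V))
    (hR2 : ∀ x : S, R (R x) = x) :
    ∀ (u : W) (v : V), (∀ w : W, G v (w : V) = F u w) →
      ∃ hv : v ∈ W, ∀ w : W, G (u : V) (w : V) = F ⟨v, hv⟩ w := by
  intro u v huv
  have hsymmG : ∀ x y : V, G x y = G y x := fun x y => (hGsymm.eq x y).symm ▸ rfl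
  have hrefl : G.IsRefl := hGsymm.isRefl
  -- orthSub = mathlib orthogonal
  have horthEq : ∀ U : Submodule ℝ V, orthSub G U = G.orthogonal U := by
    intro U; ext x
    constructor
    · intro h w hw; exact hrefl x w (h w hw)
    · intro h w hw; exact hrefl w x (h w hw)
  set Wp := orthSub G W with hWp
  -- radical facts
  have hrad : ∀ z : W, (z : V) ∈ Wp → ∀ w : W, F z w = 0 := fun z hz => (hker z).mpr hz
  have hradr : ∀ (w z : W), (z : V) ∈ Wp → F w z = 0 := by
    intro w z hz
    have h2 := LinearMap.IsAlt.neg hFalt z w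
    rw [hrad z hz w] at h2; linarith
  -- v ∈ W
  have hvW : v ∈ W := by
    have : v ∈ G.orthogonal (G.orthogonal W) := by
      intro z hz
      have hz' : z ∈ Wp := by rw [hWp, horthEq]; exact hz
      have : G v z = F u ⟨z, hco hz'⟩ := huv ⟨z, hco hz'⟩
      rw [hradr u ⟨z, hco hz'⟩ hz'] at this
      exact hrefl v z this
    rwa [G.orthogonal_orthogonal hGnd hrefl] at this
  -- decompose u and v
  obtain ⟨uS, huS, u0, hu0, hudec⟩ := Submodule.mem_sup.mp (show (u:V) ∈ S ⊔ Wp by rw [hsup]; exact u.2)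
  obtain ⟨vS, hvS, v0, hv0, hvdec⟩ := Submodule.mem_sup.mp (show v ∈ S ⊔ Wp by rw [hsup]; exact hvW)
  set uS' : S := ⟨uS, huS⟩
  set vS' : S := ⟨vS, hvS⟩
  have huW : u = (⟨uS, hSle huS⟩ : W) + ⟨u0, hco hu0⟩ := by
    apply Subtype.ext; simpa using hudec.symm
  -- key: vS' = R uS'
  have hkey : vS' = R uS' := by
    have h0 : vS' - R uS' = 0 := by
      apply hGS
      intro y
      have h1 : G v (y : V) = F u ⟨(y : V), hSle y.2⟩ := huv ⟨(y : V), hSle y.2⟩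
      have h2 : G v (y : V) = G vS (y : V) := by
        have : G v0 (y : V) = 0 := hv0 (y : V) (hSle y.2)
        rw [← hvdec] at *
        simp [this]
      have h3 : F u ⟨(y : V), hSle y.2⟩ = G ((R uS' : S) : V) (y : V) := by
        rw [huW]
        have hz : F (⟨u0, hco hu0⟩ : W) ⟨(y : V), hSle y.2⟩ = 0 := hrad _ hu0 _
        simp only [map_add, LinearMap.add_apply, hz, add_zero]
        exact hR uS' y
      have : G vS (y : V) = G ((R uS' : S) : V) (y : V) := by
        rw [← h2, h1, h3]
      simp only [Submodule.coe_sub, map_sub, LinearMap.sub_apply]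
      linarith [this]
    have := sub_eq_zero.mp h0
    exact this
  -- conclusion
  refine ⟨hvW, ?_⟩
  intro w
  obtain ⟨s, hs, z, hz, hwdec⟩ := Submodule.mem_sup.mp (show (w:V) ∈ S ⊔ Wp by rw [hsup]; exact w.2)
  have hwW : w = (⟨s, hSle hs⟩ : W) + ⟨z, hco hz⟩ := by
    apply Subtype.ext; simpa using hwdec.symm
  have hvWdec : (⟨v, hvW⟩ : W) = (⟨vS, hSle hvS⟩ : W) + ⟨v0, hco hv0⟩ := by
    apply Subtype.ext; simpa using hvdec.symm
  -- LHS
  have hLHS : G (u : V) (w : V) = G uS s := by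
    rw [huW, hwW]
    have h1 : G u0 s = 0 := hu0 s (hSle hs)
    have h2 : G u0 z = 0 := hu0 z (hco hz)
    have h3 : G uS z = 0 := hrefl z uS (hz uS (hSle huS))
    push_cast
    simp [h1, h2, h3]
  -- RHS
  have hRHS : F (⟨v, hvW⟩ : W) w = G uS s := by
    rw [hvWdec, hwW]
    have h1 : F (⟨v0, hco hv0⟩ : W) ⟨s, hSle hs⟩ = 0 := hrad _ hv0 _
    have h1' : F (⟨v0, hco hv0⟩ : W) ⟨z, hco hz⟩ = 0 := hrad _ hv0 _
    have h2 : F (⟨vS, hSle hvS⟩ : W) ⟨z, hco hz⟩ = 0 := hradr _ _ hz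
    have h3 : F (⟨vS, hSle hvS⟩ : W) ⟨s, hSle hs⟩ = G uS s := by
      have h4 : R vS' = uS' := by rw [hkey, hR2]
      have := hR vS' ⟨s, hs⟩
      rw [h4] at this
      exact this
    simp only [map_add, LinearMap.add_apply, h1, h1', h2, h3, add_zero]
  rw [hLHS, hRHS]
end

section
/- Let V be a finite-dimensional real vector space with nondegenerate symmetric bilinear form G, W a subspace, F alternating on W. If for every pair (u,v) with u ∈ W, v ∈ V, G(v,·)|_W = F(u,·)|_W one has v ∈ W and G(u,·)|_W = F(v,·)|_W (topological bibrane condition), then the radical of F on W equals W⊥, i.e. {u ∈ W : F(u,w) = 0 ∀ w ∈ W} = W ∩ W⊥. -/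
open Module

/-- "only if" part of Proposition 3: under the topological
bibrane condition, the radical of `F` on `W` equals `W ∩ W⊥`: a vector `u ∈ W`
satisfies `F(u,·)|_W = 0` iff `G(u,·)|_W = 0`. -/
theorem stmt6 {V : Type*} [AddCommGroup V] [Module ℝ V] [FiniteDimensional ℝ V]
    (G : LinearMap.BilinForm ℝ V) (hGnd : G.Nondegenerate) (hGsymm : G.IsSymm)
    (W : Submodule ℝ V) (F : LinearMap.BilinForm ℝ W) (hFalt : F.IsAlt)
    (hbib : ∀ (u : W) (v : V), (∀ w : W, G v (w : V) = F u w) →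
      ∃ hv : v ∈ W, ∀ w : W, G (u : V) (w : V) = F ⟨v, hv⟩ w) :
    ∀ u : W, (∀ w : W, F u w = 0) ↔ (∀ w ∈ W, G (u : V) w = 0) := by
  intro u
  constructor
  · intro hF w hw
    obtain ⟨hv, h⟩ := hbib u 0 (fun w => by simp [hF w])
    have := h ⟨w, hw⟩
    rwa [show (⟨0, hv⟩ : W) = 0 from rfl, map_zero, LinearMap.zero_apply] at this
  · intro hG w
    obtain ⟨g, hg⟩ := LinearMap.exists_extend (F u)
    set v := (G.toDual hGnd).symm g with hvdef
    have hGv : ∀ w : W, G v (w : V) = F u w := by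
      intro w
      rw [LinearMap.BilinForm.apply_toDual_symm_apply, ← hg]
      rfl
    obtain ⟨hvW, h1⟩ := hbib u v hGv
    have hFv : ∀ w : W, F ⟨v, hvW⟩ w = 0 := fun w => by
      rw [← h1 w]; exact hG w w.2
    obtain ⟨h0, h2⟩ := hbib ⟨v, hvW⟩ 0 (fun w => by simp [hFv w])
    have h3 := h2 w
    rw [show (⟨0, h0⟩ : W) = 0 from rfl, map_zero, LinearMap.zero_apply] at h3
    rw [← hGv w]
    exact h3
end

section
/- Let V be a 2n-dimensional real vector space with a nondegenerate symmetric bilinear form G of signature (n,n), W ⊆ V a coisotropic subspace of dimension k (so n ≤ k ≤ 2n), and F an alternating form on W with radical W⊥ such that, on a complement S of W⊥ in W, the endomorphism R = G̃⁻¹F̃ satisfies R² = id. Define R₊ = {u ∈ W : G(u,w) = F(u,w) for all w ∈ W}. Then dim R₊ = n. -/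
open Module

/-- The subbundle `R₊ = {u ∈ W : G(u,w) = F(u,w) for all w ∈ W}`. -/
def Rplus {V : Type*} [AddCommGroup V] [Module ℝ V]
    (G : LinearMap.BilinForm ℝ V) (W : Submodule ℝ V)
    (F : LinearMap.BilinForm ℝ W) : Submodule ℝ W where
  carrier := {u | ∀ w : W, G (u : V) (w : V) = F u w}
  zero_mem' := by intro w; simp
  add_mem' := by intro a b ha hb w; simp [ha w, hb w]
  smul_mem' := by intro c a ha w; simp [ha w]

/-- A totally isotropic subspace for a nondegenerate reflexive bilinear form has
dimension at most half the dimension of the space. -/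
lemma half_dim_aux {K V' : Type*} [Field K] [AddCommGroup V'] [Module K V']
    [FiniteDimensional K V']
    (B : LinearMap.BilinForm K V') (hnd : B.Nondegenerate) (hrefl : B.IsRefl)
    (U : Submodule K V') (hiso : ∀ x ∈ U, ∀ y ∈ U, B x y = 0) :
    2 * finrank K U ≤ finrank K V' := by
  have hle : U ≤ B.orthogonal U := fun x hx n hn => hiso n hn x hx
  have h1 : finrank K U ≤ finrank K (B.orthogonal U) := Submodule.finrank_mono hle
  have h2 := LinearMap.BilinForm.finrank_orthogonal hnd U
  have h3 := Submodule.finrank_le U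
  omega

/-- part of Proposition 5: for a topological bibrane
`(W,F)` in a space of signature `(n,n)`, the subspace `R₊` has dimension `n`. -/
theorem stmt8 {V : Type*} [AddCommGroup V] [Module ℝ V] [FiniteDimensional ℝ V]
    (n k : ℕ) (hdim : finrank ℝ V = 2 * n)
    (G : LinearMap.BilinForm ℝ V) (hGnd : G.Nondegenerate) (hGsymm : G.IsSymm)
    (hsig : ∃ P N : Submodule ℝ V, IsCompl P N ∧
      finrank ℝ P = n ∧ finrank ℝ N = n ∧
      (∀ x ∈ P, x ≠ 0 → 0 < G x x) ∧ (∀ x ∈ N, x ≠ 0 → G x x < 0))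
    (W : Submodule ℝ V) (hco : orthSub G W ≤ W) (hk : finrank ℝ W = k)
    (F : LinearMap.BilinForm ℝ W) (hFalt : F.IsAlt)
    (hker : ∀ u : W, (∀ w : W, F u w = 0) ↔ (u : V) ∈ orthSub G W)
    (S : Submodule ℝ V) (hSle : S ≤ W)
    (hdisj : S ⊓ orthSub G W = ⊥) (hsup : S ⊔ orthSub G W = W)
    (R : S →ₗ[ℝ] S)
    (hR : ∀ x y : S, F ⟨(x : V), hSle x.2⟩ ⟨(y : V), hSle y.2⟩ = G ((R x : S) : V) (y : V))
    (hR2 : ∀ x : S, R (R x) = x) :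
    finrank ℝ (Rplus G W F) = n := by
  classical
  clear hsig
  set P : Submodule ℝ V := orthSub G W with hPdef
  have hPmem : ∀ z : V, z ∈ P ↔ ∀ w ∈ W, G z w = 0 := fun z => Iff.rfl
  have hGrefl : G.IsRefl := hGsymm.isRefl
  have hPorth : P = G.orthogonal W := by
    ext v
    rw [LinearMap.BilinForm.mem_orthogonal_iff, hPmem]
    exact ⟨fun hv w hw => hGrefl v w (hv w hw), fun hv w hw => hGrefl w v (hv w hw)⟩
  -- dimension of P
  have hfinP : k + finrank ℝ P = 2 * n := by
    have h := LinearMap.BilinForm.finrank_add_finrank_orthogonal (B := G) hGrefl W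
    rw [LinearMap.BilinForm.orthogonal_top_eq_bot hGnd, inf_bot_eq, finrank_bot, add_zero,
      hdim, hk, ← hPorth] at h
    exact h
  -- dimension of S
  have hfinSP : finrank ℝ S + finrank ℝ P = k := by
    have h := Submodule.finrank_sup_add_finrank_inf_eq S P
    rw [hsup, hdisj, finrank_bot, add_zero, hk] at h
    exact h.symm
  -- decomposition of W
  have hdecomp : ∀ w : W, ∃ (s : S) (z : V), z ∈ P ∧ (w : V) = (s : V) + z := by
    intro w
    have hw : (w : V) ∈ S ⊔ P := by rw [hsup]; exact w.2
    obtain ⟨s, hs, z, hz, hsz⟩ := Submodule.mem_sup.mp hw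
    exact ⟨⟨s, hs⟩, z, hz, hsz.symm⟩
  -- F vanishes against P
  have hFzero : ∀ (z : W), (z : V) ∈ P → ∀ u : W, F z u = 0 := fun z hz u => (hker z).mpr hz u
  have hFzero' : ∀ (z : W), (z : V) ∈ P → ∀ u : W, F u z = 0 :=
    fun z hz u => hFalt.isRefl z u (hFzero z hz u)
  -- G vanishes between W and P
  have hGzero : ∀ v ∈ W, ∀ z ∈ P, G v z = 0 := fun v hv z hz => hGrefl z v (hz v hv)
  -- the restricted form on S
  set G' : LinearMap.BilinForm ℝ S := G.restrict S with hG'def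
  have hG'apply : ∀ x y : S, G' x y = G (x : V) (y : V) := fun x y => rfl
  have hG'refl : G'.IsRefl := fun x y h => hGrefl (x : V) (y : V) h
  have hG'nd : G'.Nondegenerate := by
    refine (LinearMap.IsRefl.nondegenerate_iff_separatingLeft (B := G') hG'refl).mpr ?_
    intro x hx
    have hRx : ((R x : S) : V) ∈ P := by
      apply (hker ⟨(R x : S), hSle (R x).2⟩).mp
      intro w
      obtain ⟨s, z, hz, hw⟩ := hdecomp w
      have hwsplit : w = (⟨(s : V), hSle s.2⟩ : W) + ⟨z, hco hz⟩ :=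
        Subtype.ext (by simpa using hw)
      rw [hwsplit, map_add, hFzero' ⟨z, hco hz⟩ hz, add_zero, hR (R x) s, hR2]
      have := hx s
      rwa [hG'apply] at this
    have hmem : ((R x : S) : V) ∈ S ⊓ P := ⟨(R x).2, hRx⟩
    rw [hdisj] at hmem
    have hRx0 : R x = 0 := Subtype.ext (by simpa using hmem)
    have h := hR2 x
    rw [hRx0, map_zero] at h
    exact h.symm
  -- eigenspaces of R
  set Sp : Submodule ℝ S := LinearMap.ker (R - LinearMap.id) with hSpdef
  set Sm : Submodule ℝ S := LinearMap.ker (R + LinearMap.id) with hSmdef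
  have hmemSp : ∀ x : S, x ∈ Sp ↔ R x = x := by
    intro x
    rw [hSpdef, LinearMap.mem_ker, LinearMap.sub_apply, LinearMap.id_apply, sub_eq_zero]
  have hmemSm : ∀ x : S, x ∈ Sm ↔ R x = -x := by
    intro x
    rw [hSmdef, LinearMap.mem_ker, LinearMap.add_apply, LinearMap.id_apply,
      add_eq_zero_iff_eq_neg]
  have hsupSpSm : Sp ⊔ Sm = ⊤ := by
    rw [eq_top_iff]
    intro x _
    apply Submodule.mem_sup.mpr
    refine ⟨(2⁻¹ : ℝ) • (x + R x), ?_, (2⁻¹ : ℝ) • (x - R x), ?_, ?_⟩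
    · rw [hmemSp, map_smul, map_add, hR2, add_comm]
    · rw [hmemSm, map_smul, map_sub, hR2, ← smul_neg, neg_sub]
    · module
  have hdisjSpSm : Sp ⊓ Sm = ⊥ := by
    rw [eq_bot_iff]
    rintro x ⟨h1, h2⟩
    have hx : x = -x := by conv_lhs => rw [← (hmemSp x).mp h1, (hmemSm x).mp h2]
    have h2x : (2 : ℝ) • x = 0 := by
      rw [two_smul]
      nth_rewrite 2 [hx]
      simp
    have hx0 := smul_eq_zero.mp h2x
    simp only [Submodule.mem_bot]
    simpa using hx0
  have hfinSpSm : finrank ℝ Sp + finrank ℝ Sm = finrank ℝ S := by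
    have h := Submodule.finrank_sup_add_finrank_inf_eq Sp Sm
    rw [hsupSpSm, hdisjSpSm, finrank_bot, add_zero, finrank_top] at h
    exact h.symm
  -- eigenspaces are isotropic
  have hisoSp : ∀ x ∈ Sp, ∀ y ∈ Sp, G' x y = 0 := by
    intro x hx y hy
    have hxx := (hmemSp x).mp hx
    have hyy := (hmemSp y).mp hy
    have h1 := hR x y
    have h2 := hR y x
    rw [hxx] at h1
    rw [hyy] at h2
    have hs : G (x : V) (y : V) = G (y : V) (x : V) := hGsymm.eq (x : V) (y : V)
    have halt : F ⟨(y : V), hSle y.2⟩ ⟨(x : V), hSle x.2⟩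
        = -F ⟨(x : V), hSle x.2⟩ ⟨(y : V), hSle y.2⟩ := (LinearMap.IsAlt.neg hFalt _ _).symm
    rw [hG'apply]
    rw [halt] at h2
    linarith [h1, h2, hs]
  have hisoSm : ∀ x ∈ Sm, ∀ y ∈ Sm, G' x y = 0 := by
    intro x hx y hy
    have hxx := (hmemSm x).mp hx
    have hyy := (hmemSm y).mp hy
    have h1 := hR x y
    have h2 := hR y x
    rw [hxx] at h1
    rw [hyy] at h2
    have hc1 : G (((-x : S) : S) : V) (y : V) = -G (x : V) (y : V) := by
      simp
    have hc2 : G (((-y : S) : S) : V) (x : V) = -G (y : V) (x : V) := by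
      simp
    rw [hc1] at h1
    rw [hc2] at h2
    have hs : G (x : V) (y : V) = G (y : V) (x : V) := hGsymm.eq (x : V) (y : V)
    have halt : F ⟨(y : V), hSle y.2⟩ ⟨(x : V), hSle x.2⟩
        = -F ⟨(x : V), hSle x.2⟩ ⟨(y : V), hSle y.2⟩ := (LinearMap.IsAlt.neg hFalt _ _).symm
    rw [hG'apply]
    rw [halt] at h2
    linarith [h1, h2, hs]
  have hp : 2 * finrank ℝ Sp ≤ finrank ℝ S := half_dim_aux G' hG'nd hG'refl Sp hisoSp
  have hm : 2 * finrank ℝ Sm ≤ finrank ℝ S := half_dim_aux G' hG'nd hG'refl Sm hisoSm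
  -- the main decomposition : Rplus = P ⊕ Sp
  set SpV : Submodule ℝ V := Sp.map S.subtype with hSpVdef
  have hmain : (Rplus G W F).map W.subtype = P ⊔ SpV := by
    apply le_antisymm
    · rintro v ⟨u, hu, rfl⟩
      have hu' : ∀ w : W, G (u : V) (w : V) = F u w := hu
      obtain ⟨s, z, hz, huv⟩ := hdecomp u
      have husplit : u = (⟨(s : V), hSle s.2⟩ : W) + ⟨z, hco hz⟩ :=
        Subtype.ext (by simpa using huv)
      have hsSp : s ∈ Sp := by
        apply (hmemSp s).mpr
        have key : ∀ y : S, G' (R s - s) y = 0 := by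
          intro y
          have e1 := hR s y
          have e2 : F u ⟨(y : V), hSle y.2⟩
              = F ⟨(s : V), hSle s.2⟩ ⟨(y : V), hSle y.2⟩ := by
            rw [husplit, map_add, LinearMap.add_apply, hFzero ⟨z, hco hz⟩ hz, add_zero]
          have e3 := hu' ⟨(y : V), hSle y.2⟩
          have e4 : G (u : V) (y : V) = G (s : V) (y : V) + G z (y : V) := by
            rw [huv, map_add, LinearMap.add_apply]
          have e5 : G z (y : V) = 0 := hz (y : V) (hSle y.2)
          have heq : G ((R s : S) : V) (y : V) = G (s : V) (y : V) := by
            rw [← e1, ← e2, ← e3, e4, e5, add_zero]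
          have hcoe : ((R s - s : S) : V) = ((R s : S) : V) - (s : V) := rfl
          rw [hG'apply, hcoe, map_sub, LinearMap.sub_apply, heq, sub_self]
        have h0 : R s - s = 0 := hG'nd.1 _ key
        exact sub_eq_zero.mp h0
      apply Submodule.mem_sup.mpr
      exact ⟨z, hz, (s : V), Submodule.mem_map_of_mem hsSp, (add_comm _ _).trans huv.symm⟩
    · apply sup_le
      · intro z hz
        refine ⟨⟨z, hco hz⟩, ?_, rfl⟩
        intro w
        show G z (w : V) = F ⟨z, hco hz⟩ w
        rw [hFzero ⟨z, hco hz⟩ hz w]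
        exact hz (w : V) w.2
      · rintro v ⟨s, hsSp, rfl⟩
        refine ⟨⟨(s : V), hSle s.2⟩, ?_, rfl⟩
        intro w
        show G (s : V) (w : V) = F ⟨(s : V), hSle s.2⟩ w
        obtain ⟨s', z, hz, hw⟩ := hdecomp w
        have hwsplit : w = (⟨(s' : V), hSle s'.2⟩ : W) + ⟨z, hco hz⟩ :=
          Subtype.ext (by simpa using hw)
        have hRs := (hmemSp s).mp hsSp
        have lhs : G (s : V) (w : V) = G (s : V) (s' : V) := by
          rw [hw, map_add, hGzero (s : V) (hSle s.2) z hz, add_zero]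
        have rhs : F ⟨(s : V), hSle s.2⟩ w = F ⟨(s : V), hSle s.2⟩ ⟨(s' : V), hSle s'.2⟩ := by
          rw [hwsplit, map_add, hFzero' ⟨z, hco hz⟩ hz, add_zero]
        rw [lhs, rhs, hR s s', hRs]
  -- finrank bookkeeping
  have hfr1 : finrank ℝ (Rplus G W F) = finrank ℝ ((Rplus G W F).map W.subtype) :=
    (Submodule.finrank_map_subtype_eq _ _).symm
  have hfr2 : finrank ℝ SpV = finrank ℝ Sp := Submodule.finrank_map_subtype_eq _ _
  have hdisj2 : P ⊓ SpV = ⊥ := by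
    rw [eq_bot_iff]
    rintro x ⟨hx1, hx2⟩
    have hxS : x ∈ S := by
      obtain ⟨s, -, rfl⟩ := hx2
      exact s.2
    have hmem : x ∈ S ⊓ P := ⟨hxS, hx1⟩
    rw [hdisj] at hmem
    exact hmem
  have hsum : finrank ℝ ↥(P ⊔ SpV) = finrank ℝ P + finrank ℝ SpV := by
    have h := Submodule.finrank_sup_add_finrank_inf_eq P SpV
    rw [hdisj2, finrank_bot, add_zero] at h
    exact h
  rw [hfr1, hmain, hsum, hfr2]
  omega
end

section
/- Let V be a real vector space with a nondegenerate symmetric bilinear form G, and F a nondegenerate alternating form on V with R = G⁻¹F satisfying R² = id. Then the +1 and -1 eigenspaces V₊ and V₋ of R are both Lagrangian with respect to the symplectic form F: F vanishes identically on V₊ and on V₋, and V = V₊ ⊕ V₋. -/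
open Module

/-- with `F(x,y) = G(Rx,y)` nondegenerate alternating and
`R² = id`, the `±1` eigenspaces `V₊ = ker(R - 1)`, `V₋ = ker(R + 1)` are both
`F`-Lagrangian (`F` vanishes on each) and `V = V₊ ⊕ V₋`. -/
theorem stmt14 {V : Type*} [AddCommGroup V] [Module ℝ V] [FiniteDimensional ℝ V]
    (G : LinearMap.BilinForm ℝ V) (hGnd : G.Nondegenerate) (hGsymm : G.IsSymm)
    (F : LinearMap.BilinForm ℝ V) (hFnd : F.Nondegenerate) (hFalt : F.IsAlt)
    (R : Module.End ℝ V)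
    (hR : ∀ x y : V, F x y = G (R x) y)
    (hR2 : R * R = 1) :
    (∀ x ∈ LinearMap.ker (R - 1), ∀ y ∈ LinearMap.ker (R - 1), F x y = 0) ∧
    (∀ x ∈ LinearMap.ker (R + 1), ∀ y ∈ LinearMap.ker (R + 1), F x y = 0) ∧
    IsCompl (LinearMap.ker (R - 1)) (LinearMap.ker (R + 1)) := by
  have hFanti : ∀ x y : V, F x y = -F y x := fun x y => by rw [← LinearMap.IsAlt.neg hFalt x y]; ring
  have hkp : ∀ x : V, x ∈ LinearMap.ker (R - 1) → R x = x := by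
    intro x hx
    have := LinearMap.mem_ker.mp hx
    simpa [sub_eq_zero] using this
  have hkm : ∀ x : V, x ∈ LinearMap.ker (R + 1) → R x = -x := by
    intro x hx
    have := LinearMap.mem_ker.mp hx
    simpa [add_eq_zero_iff_eq_neg] using this
  refine ⟨?_, ?_, ?_⟩
  · intro x hx y hy
    have h1 : F x y = G x y := by rw [hR, hkp x hx]
    have h2 : F y x = G y x := by rw [hR, hkp y hy]
    have hs : G y x = G x y := by
      have := hGsymm.eq x y; simpa using this.symm
    have := hFanti x y
    rw [h1, h2, hs] at this
    linarith
  · intro x hx y hy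
    have h1 : F x y = -G x y := by rw [hR, hkm x hx]; simp
    have h2 : F y x = -G y x := by rw [hR, hkm y hy]; simp
    have hs : G y x = G x y := by
      have := hGsymm.eq x y; simpa using this.symm
    have := hFanti x y
    rw [h1, h2, hs] at this
    linarith
  · constructor
    · rw [disjoint_iff]
      ext x
      simp only [Submodule.mem_inf, Submodule.mem_bot]
      constructor
      · rintro ⟨h1, h2⟩
        have e1 := hkp x h1
        have e2 := hkm x h2
        have : x = -x := by rw [← e2, e1]
        have h2x : (2 : ℝ) • x = 0 := by
          have : x + x = 0 := by nth_rewrite 1 [this]; simp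
          rw [two_smul]; exact this
        have := smul_eq_zero.mp h2x
        rcases this with h | h
        · norm_num at h
        · exact h
      · rintro rfl; simp
    · rw [codisjoint_iff, eq_top_iff]
      intro x _
      have hx : x = (2⁻¹ : ℝ) • (x + R x) + (2⁻¹ : ℝ) • (x - R x) := by
        rw [smul_add, smul_sub]
        module
      rw [hx]
      have hR2' : ∀ v, R (R v) = v := by
        intro v
        have := congrArg (fun f => f v) hR2
        simpa [Module.End.mul_apply] using this
      refine Submodule.add_mem_sup ?_ ?_
      · apply Submodule.smul_mem
        rw [LinearMap.mem_ker]
        simp only [LinearMap.sub_apply, Module.End.one_apply, map_add, hR2']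
        abel
      · apply Submodule.smul_mem
        rw [LinearMap.mem_ker]
        simp only [LinearMap.add_apply, Module.End.one_apply, map_sub, hR2']
        abel
end

section
/- Let g, ĝ be positive-definite symmetric n×n real matrices, b, b̂, f, f̂ antisymmetric n×n real matrices, and h ∈ GL(n,ℝ). Set G = diag(g, -ĝ) and F = -𝓕 - diag(b, -b̂) where 𝓕 has block form [[f, h], [-hᵀ, f̂]]. If (G⁻¹F)² = 1 (the space-filling topological defect condition), then ĝ = hᵀ( g - (b+f) g⁻¹ (b+f) )⁻¹ h and (b+f) g⁻¹ h + h ĝ⁻¹ (b̂ - f̂) = 0. -/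
open Matrix

/-- T-duality, section 7: for the space-filling defect on a
product of flat tori, the condition `(G⁻¹F)² = 1` implies the T-duality
transformation rules relating `(g,b)` and `(ghat,bhat)`. -/
theorem stmt19 (n : ℕ)
    (g ghat b bhat f fhat h : Matrix (Fin n) (Fin n) ℝ)
    (hg : g.PosDef) (hghat : ghat.PosDef)
    (hb : bᵀ = -b) (hbhat : bhatᵀ = -bhat) (hf : fᵀ = -f) (hfhat : fhatᵀ = -fhat)
    (hh : IsUnit h)
    (G : Matrix (Fin n ⊕ Fin n) (Fin n ⊕ Fin n) ℝ)
    (hG : G = Matrix.fromBlocks g 0 0 (-ghat))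
    (F : Matrix (Fin n ⊕ Fin n) (Fin n ⊕ Fin n) ℝ)
    (hF : F = -(Matrix.fromBlocks f h (-hᵀ) fhat) - Matrix.fromBlocks b 0 0 (-bhat))
    (htop : (G⁻¹ * F) ^ 2 = 1) :
    ghat = hᵀ * (g - (b + f) * g⁻¹ * (b + f))⁻¹ * h ∧
      (b + f) * g⁻¹ * h + h * ghat⁻¹ * (bhat - fhat) = 0 := by
  have hgd : IsUnit g.det := isUnit_iff_ne_zero.2 hg.det_pos.ne'
  have hghatd : IsUnit ghat.det := isUnit_iff_ne_zero.2 hghat.det_pos.ne'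
  have hhd : IsUnit h.det := (Matrix.isUnit_iff_isUnit_det h).1 hh
  have hhtd : IsUnit hᵀ.det := by rwa [Matrix.det_transpose]
  -- inverse of G
  have hGinv : G⁻¹ = Matrix.fromBlocks g⁻¹ 0 0 (-(ghat⁻¹)) := by
    apply Matrix.inv_eq_right_inv
    rw [hG, Matrix.fromBlocks_multiply]
    simp [Matrix.mul_nonsing_inv g hgd, Matrix.mul_nonsing_inv ghat hghatd,
      ← Matrix.fromBlocks_one]
  -- block form of G⁻¹ * F
  have hM : G⁻¹ * F =
      Matrix.fromBlocks (g⁻¹ * (-(b + f))) (g⁻¹ * (-h))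
        (-(ghat⁻¹) * hᵀ) (-(ghat⁻¹) * (bhat - fhat)) := by
    rw [hGinv, hF]
    have : -(Matrix.fromBlocks f h (-hᵀ) fhat) - Matrix.fromBlocks b 0 0 (-bhat) =
        Matrix.fromBlocks (-(b + f)) (-h) hᵀ (bhat - fhat) := by
      ext (i|i) (j|j) <;>
        simp [Matrix.fromBlocks, Matrix.sub_apply, Matrix.neg_apply] <;> ring
    rw [this, Matrix.fromBlocks_multiply]
    simp
  rw [sq, hM, Matrix.fromBlocks_multiply, ← Matrix.fromBlocks_one] at htop
  have e11 := congrArg Matrix.toBlocks₁₁ htop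
  have e12 := congrArg Matrix.toBlocks₁₂ htop
  simp only [Matrix.toBlocks_fromBlocks₁₁, Matrix.toBlocks_fromBlocks₁₂] at e11 e12
  -- clean up equation (1,1):  (b+f) g⁻¹ (b+f) + h ghat⁻¹ hᵀ = g
  have E1 : (b + f) * g⁻¹ * (b + f) + h * ghat⁻¹ * hᵀ = g := by
    have := congrArg (fun X => g * X) e11
    simp only [Matrix.mul_add, ← Matrix.mul_assoc, Matrix.mul_nonsing_inv g hgd,
      Matrix.one_mul, Matrix.mul_one] at this
    calc (b + f) * g⁻¹ * (b + f) + h * ghat⁻¹ * hᵀ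
        = g * (g⁻¹ * -(b + f) * (g⁻¹ * -(b + f)) + g⁻¹ * -h * (-ghat⁻¹ * hᵀ)) := by
          simp only [Matrix.mul_add, ← Matrix.mul_assoc, Matrix.mul_nonsing_inv g hgd]
          noncomm_ring
      _ = g * 1 := by rw [e11]
      _ = g := Matrix.mul_one g
  have E2 : (b + f) * g⁻¹ * h + h * ghat⁻¹ * (bhat - fhat) = 0 := by
    calc (b + f) * g⁻¹ * h + h * ghat⁻¹ * (bhat - fhat)
        = g * (g⁻¹ * -(b + f) * (g⁻¹ * -h) + g⁻¹ * -h * (-ghat⁻¹ * (bhat - fhat))) := by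
          simp only [Matrix.mul_add, ← Matrix.mul_assoc, Matrix.mul_nonsing_inv g hgd]
          noncomm_ring
      _ = g * 0 := by rw [e12]
      _ = 0 := Matrix.mul_zero g
  refine ⟨?_, E2⟩
  have hsub : g - (b + f) * g⁻¹ * (b + f) = h * ghat⁻¹ * hᵀ :=
    sub_eq_of_eq_add' E1.symm
  rw [hsub, Matrix.mul_inv_rev, Matrix.mul_inv_rev, Matrix.nonsing_inv_nonsing_inv ghat hghatd]
  rw [← Matrix.mul_assoc, ← Matrix.mul_assoc, Matrix.mul_nonsing_inv hᵀ hhtd,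
    Matrix.one_mul, Matrix.mul_assoc, Matrix.nonsing_inv_mul h hhd, Matrix.mul_one]
end
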